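/- The real vector space of real skew-symmetric n×n matrices A (Aᵗ = −A) satisfying A_{kk} = 0 and Σ_{l} A_{kl} = 0 for every row k has dimension (n−1)(n−2)/2. -/

import Mathlib

open Finset

namespace Stmt10Aux

variable (m : ℕ)

/-- The index set of strictly upper-triangular positions of an `(m+1) × (m+1)` matrix. -/
abbrev Idx := {p : Fin (m+1) × Fin (m+1) // p.1 < p.2}

def idxEquiv : Idx m ≃ (Σ j : Fin (m+1), Fin j) where
  toFun p := ⟨p.1.2, ⟨p.1.1, p.2⟩⟩
  invFun x := ⟨(⟨x.2, x.2.isLt.trans x.1.isLt⟩, x.1), x.2.isLt⟩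
  left_inv p := rfl
  right_inv x := rfl

lemma card_idx : Fintype.card (Idx m) = (m + 1) * m / 2 := by
  rw [Fintype.card_congr (idxEquiv m), Fintype.card_sigma]
  simp only [Fintype.card_fin]
  rw [Fin.sum_univ_eq_sum_range (fun i => i) (m + 1), Finset.sum_range_id]
  simp

variable (f : Idx m → ℝ)

/-- Auxiliary skew matrix built from the values `f` on upper-triangular positions. -/
def B : Matrix (Fin (m+1)) (Fin (m+1)) ℝ := fun i j =>
  if h : i < j then f ⟨(i, j), h⟩ else if h : j < i then -f ⟨(j, i), h⟩ else 0

lemma B_skew (i j : Fin (m+1)) : B m f j i = -B m f i j := by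
  rcases lt_trichotomy i j with h | h | h
  · rw [B, B, dif_neg (asymm h), dif_pos h, dif_pos h]
  · subst h; rw [B, dif_neg (lt_irrefl i), dif_neg (lt_irrefl i)]; simp
  · rw [B, B, dif_pos h, dif_neg (asymm h), dif_pos h, neg_neg]

lemma B_sum : ∑ i, ∑ j, B m f i j = 0 := by
  have h : ∑ i, ∑ j, B m f i j = -∑ i, ∑ j, B m f i j := by
    conv_lhs => rw [show ∑ i, ∑ j, B m f i j = ∑ j, ∑ i, B m f i j from Finset.sum_comm]
    rw [← Finset.sum_neg_distrib]
    refine Finset.sum_congr rfl fun x _ => ?_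
    rw [← Finset.sum_neg_distrib]
    exact Finset.sum_congr rfl fun y _ => B_skew m f x y
  linarith

/-- Extension of `B` to an `(m+2) × (m+2)` matrix with zero row sums. -/
def A : Matrix (Fin (m+2)) (Fin (m+2)) ℝ := fun i j =>
  Fin.lastCases
    (Fin.lastCases 0 (fun j' => ∑ k, B m f j' k) j)
    (fun i' => Fin.lastCases (-∑ k, B m f i' k) (fun j' => B m f i' j') j) i

@[simp] lemma A_last_last : A m f (Fin.last (m+1)) (Fin.last (m+1)) = 0 := by
  rw [A]; simp

@[simp] lemma A_last_cast (j : Fin (m+1)) :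
    A m f (Fin.last (m+1)) j.castSucc = ∑ k, B m f j k := by
  rw [A]; simp

@[simp] lemma A_cast_last (i : Fin (m+1)) :
    A m f i.castSucc (Fin.last (m+1)) = -∑ k, B m f i k := by
  rw [A]; simp

@[simp] lemma A_cast_cast (i j : Fin (m+1)) :
    A m f i.castSucc j.castSucc = B m f i j := by
  rw [A]; simp

lemma A_mem : (A m f).transpose = -(A m f) ∧ (∀ k, A m f k k = 0) ∧
    ∀ k, ∑ l, A m f k l = 0 := by
  refine ⟨?_, ?_, ?_⟩
  · ext i j
    simp only [Matrix.transpose_apply, Matrix.neg_apply]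
    induction i using Fin.lastCases with
    | last =>
      induction j using Fin.lastCases with
      | last => simp
      | cast j' => simp
    | cast i' =>
      induction j using Fin.lastCases with
      | last => simp
      | cast j' => simpa using B_skew m f i' j'
  · intro k
    induction k using Fin.lastCases with
    | last => simp
    | cast k' =>
      rw [A_cast_cast, B, dif_neg (lt_irrefl k'), dif_neg (lt_irrefl k')]
  · intro k
    induction k using Fin.lastCases with
    | last =>
      rw [Fin.sum_univ_castSucc]
      simp [B_sum m f]
    | cast k' =>
      rw [Fin.sum_univ_castSucc]
      simp

end Stmt10Aux

open Stmt10Aux in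
/-- The real vector space of real skew-symmetric `n × n` matrices with zero diagonal and all
row sums zero has dimension `(n-1)(n-2)/2`. -/
theorem stmt_10 (n : ℕ) (hn : 2 ≤ n)
    (S : Submodule ℝ (Matrix (Fin n) (Fin n) ℝ))
    (hS : ∀ A : Matrix (Fin n) (Fin n) ℝ,
      A ∈ S ↔ (A.transpose = -A ∧ (∀ k, A k k = 0) ∧ ∀ k, ∑ l, A k l = 0)) :
    Module.finrank ℝ S = (n - 1) * (n - 2) / 2 := by
  obtain ⟨m, rfl⟩ : ∃ m, n = m + 2 := ⟨n - 2, by omega⟩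
  -- the evaluation map on upper-triangular positions
  let φ : S →ₗ[ℝ] (Idx m → ℝ) :=
    { toFun := fun M p => (M : Matrix (Fin (m+2)) (Fin (m+2)) ℝ) p.1.1.castSucc p.1.2.castSucc
      map_add' := fun M N => rfl
      map_smul' := fun c M => rfl }
  have hinj : Function.Injective φ := by
    rw [injective_iff_map_eq_zero]
    intro M hM
    obtain ⟨ht, hd, hr⟩ := (hS M).mp M.2
    have hM' : ∀ p : Idx m, (M : Matrix (Fin (m+2)) (Fin (m+2)) ℝ) p.1.1.castSucc p.1.2.castSucc = 0 :=
      fun p => congrFun hM p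
    have claim1 : ∀ i j : Fin (m+1),
        (M : Matrix (Fin (m+2)) (Fin (m+2)) ℝ) i.castSucc j.castSucc = 0 := by
      intro i j
      rcases lt_trichotomy i j with h | h | h
      · exact hM' ⟨(i, j), h⟩
      · subst h; exact hd _
      · have := congrFun (congrFun ht j.castSucc) i.castSucc
        simp only [Matrix.transpose_apply, Matrix.neg_apply] at this
        rw [this, hM' ⟨(j, i), h⟩, neg_zero]
    have claim2 : ∀ i : Fin (m+1),
        (M : Matrix (Fin (m+2)) (Fin (m+2)) ℝ) i.castSucc (Fin.last (m+1)) = 0 := by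
      intro i
      have := hr i.castSucc
      rw [Fin.sum_univ_castSucc] at this
      simpa [claim1] using this
    have claim3 : ∀ j : Fin (m+2),
        (M : Matrix (Fin (m+2)) (Fin (m+2)) ℝ) (Fin.last (m+1)) j = 0 := by
      intro j
      induction j using Fin.lastCases with
      | last => exact hd _
      | cast j' =>
        have := congrFun (congrFun ht j'.castSucc) (Fin.last (m+1))
        simp only [Matrix.transpose_apply, Matrix.neg_apply] at this
        rw [this, claim2 j', neg_zero]
    apply Subtype.ext
    funext i j
    show (M : Matrix (Fin (m+2)) (Fin (m+2)) ℝ) i j = 0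
    induction i using Fin.lastCases with
    | last => exact claim3 j
    | cast i' =>
      induction j using Fin.lastCases with
      | last => exact claim2 i'
      | cast j' => exact claim1 i' j'
  have hsurj : Function.Surjective φ := by
    intro f
    refine ⟨⟨A m f, (hS _).mpr (A_mem m f)⟩, ?_⟩
    funext p
    show A m f p.1.1.castSucc p.1.2.castSucc = f p
    rw [A_cast_cast, B, dif_pos p.2]
  have e : S ≃ₗ[ℝ] (Idx m → ℝ) := LinearEquiv.ofBijective φ ⟨hinj, hsurj⟩
  rw [e.finrank_eq, Module.finrank_pi, card_idx]
  norm_num
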